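/- If U_+ ∈ V(r,n) is the polar orthonormal factor of a full-rank matrix M ∈ ℝ^{n×r} (i.e., M = U_+ S with S symmetric positive definite) and σ_min(M) ≥ ε > 0, then for every U₀ ∈ V(r,n), ⟨M, U_+⟩ − ⟨M, U₀⟩ ≥ (ε/2)‖U_+ − U₀‖_F². -/

import Mathlib

open Matrix

lemma rayleigh_lb {m : ℕ} {A : Matrix (Fin m) (Fin m) ℝ} (hA : A.IsHermitian)
    {c : ℝ} (hc : ∀ i, c ≤ hA.eigenvalues i) (x : Fin m → ℝ) :
    c * (x ⬝ᵥ x) ≤ x ⬝ᵥ (A *ᵥ x) := by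
  have hV : (IsHermitian.eigenvectorUnitary hA : Matrix (Fin m) (Fin m) ℝ)
      * star (IsHermitian.eigenvectorUnitary hA : Matrix (Fin m) (Fin m) ℝ) = 1 :=
    (Matrix.mem_unitaryGroup_iff).mp (IsHermitian.eigenvectorUnitary hA).2
  set V : Matrix (Fin m) (Fin m) ℝ := (IsHermitian.eigenvectorUnitary hA : Matrix (Fin m) (Fin m) ℝ) with hVdef
  have hstar : star V = Vᵀ := by
    ext i j; simp [Matrix.star_eq_conjTranspose, Matrix.conjTranspose]
  have hV' : V * Vᵀ = 1 := hstar ▸ hV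
  set y : Fin m → ℝ := Vᵀ *ᵥ x with hy
  have hyx : y ⬝ᵥ y = x ⬝ᵥ x := by
    rw [hy, dotProduct_mulVec, vecMul_transpose, mulVec_mulVec, hV', one_mulVec]
  have hAx : x ⬝ᵥ (A *ᵥ x) = ∑ i, hA.eigenvalues i * (y i)^2 := by
    conv_lhs => rw [hA.spectral_theorem]
    rw [Unitary.conjStarAlgAut_apply]
    rw [hstar, ← mulVec_mulVec, ← mulVec_mulVec, dotProduct_mulVec, ← hVdef,
      ← Matrix.mulVec_transpose, ← hy]
    simp [dotProduct, mulVec_diagonal, Function.comp]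
    exact Finset.sum_congr rfl fun i _ => by ring
  rw [hAx, ← hyx]
  calc c * (y ⬝ᵥ y) = ∑ i, c * (y i)^2 := by
        simp [dotProduct, Finset.mul_sum]; exact Finset.sum_congr rfl fun i _ => by ring
    _ ≤ ∑ i, hA.eigenvalues i * (y i)^2 :=
        Finset.sum_le_sum fun i _ => mul_le_mul_of_nonneg_right (hc i) (sq_nonneg _)


/-- If `U₊` is the polar orthonormal factor of a full-rank `M` (`M = U₊S`, `S` symmetric
positive definite) and `σ_min(M) ≥ ε > 0` (the smallest singular value being the square
root of the smallest eigenvalue of `MᵀM`), then for every `U₀ ∈ V(r,n)`,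
`⟨M,U₊⟩ − ⟨M,U₀⟩ ≥ (ε/2)‖U₊ − U₀‖_F²`. -/
theorem stmt16 {n r : ℕ} (M : Matrix (Fin n) (Fin r) ℝ)
    (Uplus : Matrix (Fin n) (Fin r) ℝ) (hUplus : Uplusᵀ * Uplus = 1)
    (S : Matrix (Fin r) (Fin r) ℝ) (hS : S.PosDef)
    (hpolar : M = Uplus * S)
    (hAA : (Mᵀ * M).IsHermitian)
    (ε : ℝ) (hε : 0 < ε)
    (hσ : ε ≤ Real.sqrt (⨅ i, hAA.eigenvalues i))
    (U₀ : Matrix (Fin n) (Fin r) ℝ) (hU₀ : U₀ᵀ * U₀ = 1) :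
    Matrix.trace (Mᵀ * Uplus) - Matrix.trace (Mᵀ * U₀)
      ≥ ε / 2 * ∑ i, ∑ j, (Uplus i j - U₀ i j) ^ 2 := by
  have hSH : S.IsHermitian := hS.isHermitian
  have hSt : Sᵀ = S := by
    have := hSH; rwa [Matrix.IsHermitian, Matrix.conjTranspose_eq_transpose_of_trivial] at this
  -- MᵀM = S * S
  have hMM : Mᵀ * M = S * S := by
    rw [hpolar, Matrix.transpose_mul, Matrix.mul_assoc, ← Matrix.mul_assoc Uplusᵀ, hUplus,
      Matrix.one_mul, hSt]
  -- infimum of eigenvalues of MᵀM is at least ε²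
  have hεnn : (0:ℝ) ≤ ε := hε.le
  have hPSD : (Mᵀ * M).PosSemidef := by
    have := Matrix.posSemidef_conjTranspose_mul_self M
    rwa [Matrix.conjTranspose_eq_transpose_of_trivial] at this
  have heig_nn : ∀ i, 0 ≤ hAA.eigenvalues i := fun i => hPSD.eigenvalues_nonneg i
  -- each eigenvalue of S is ≥ ε
  have hkey : ∀ i, ε ≤ hSH.eigenvalues i := by
    intro i
    have : Nonempty (Fin r) := ⟨i⟩
    have hinf_nn : (0:ℝ) ≤ ⨅ j, hAA.eigenvalues j :=
      le_ciInf fun j => heig_nn j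
    have hε2 : ε ^ 2 ≤ ⨅ j, hAA.eigenvalues j := by
      have := pow_le_pow_left₀ hεnn hσ 2
      rwa [Real.sq_sqrt hinf_nn] at this
    set v : Fin r → ℝ := ⇑(hSH.eigenvectorBasis i) with hv
    have hvnorm : v ⬝ᵥ v = 1 := by
      have h1 : ‖hSH.eigenvectorBasis i‖ = 1 := hSH.eigenvectorBasis.orthonormal.1 i
      have h3 := EuclideanSpace.norm_eq (hSH.eigenvectorBasis i)
      rw [h1] at h3
      have h4 : ∑ j, ‖hSH.eigenvectorBasis i j‖ ^ 2 = 1 := by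
        have h5 := congrArg (· ^ 2) h3
        simpa [Real.sq_sqrt (Finset.sum_nonneg fun j _ => sq_nonneg _)] using h5.symm
      simpa [dotProduct, Real.norm_eq_abs, sq_abs, pow_two] using h4
    have hSv : S *ᵥ v = hSH.eigenvalues i • v := hSH.mulVec_eigenvectorBasis i
    have hray := rayleigh_lb hAA (fun j => ciInf_le (Finite.bddBelow_range _) j) v
    rw [hvnorm, mul_one] at hray
    have hq : v ⬝ᵥ ((Mᵀ * M) *ᵥ v) = hSH.eigenvalues i * hSH.eigenvalues i := by
      rw [hMM, ← mulVec_mulVec, hSv, Matrix.mulVec_smul, hSv, smul_smul]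
      simp [dotProduct_smul, hvnorm]
    rw [hq] at hray
    have hμ : 0 < hSH.eigenvalues i := hS.eigenvalues_pos i
    nlinarith [hε2, hray, hμ, hε, sq_nonneg (ε - hSH.eigenvalues i)]
  -- quadratic form bound for S
  have hquad : ∀ x : Fin r → ℝ, ε * (x ⬝ᵥ x) ≤ x ⬝ᵥ (S *ᵥ x) :=
    fun x => rayleigh_lb hSH hkey x
  set D : Matrix (Fin n) (Fin r) ℝ := Uplus - U₀ with hD
  -- trace identity
  have htr : 2 * (Matrix.trace (Mᵀ * Uplus) - Matrix.trace (Mᵀ * U₀))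
      = Matrix.trace (D * S * Dᵀ) := by
    have h1 : Matrix.trace (D * S * Dᵀ) = Matrix.trace (Dᵀ * D * S) := by
      rw [Matrix.trace_mul_cycle]
    have h2 : Dᵀ * D = 1 + 1 - Uplusᵀ * U₀ - U₀ᵀ * Uplus := by
      rw [hD, Matrix.transpose_sub, Matrix.sub_mul, Matrix.mul_sub, Matrix.mul_sub,
        hUplus, hU₀]
      abel
    have h3 : Matrix.trace (Mᵀ * Uplus) = Matrix.trace S := by
      rw [hpolar, Matrix.transpose_mul, hSt, Matrix.mul_assoc, hUplus, Matrix.mul_one]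
    have h4 : Matrix.trace (U₀ᵀ * Uplus * S) = Matrix.trace (Mᵀ * U₀) := by
      have : U₀ᵀ * Uplus * S = (Mᵀ * U₀)ᵀ := by
        rw [hpolar]
        simp [Matrix.transpose_mul, Matrix.transpose_transpose, hSt, Matrix.mul_assoc]
      rw [this, Matrix.trace_transpose]
    have h5 : Matrix.trace (Uplusᵀ * U₀ * S) = Matrix.trace (Mᵀ * U₀) := by
      rw [hpolar, Matrix.transpose_mul, hSt, Matrix.mul_assoc S, Matrix.trace_mul_comm]
    rw [h1, h2, h3]
    simp only [Matrix.sub_mul, Matrix.add_mul, Matrix.one_mul, Matrix.trace_sub,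
      Matrix.trace_add, h4, h5]
    ring
  -- trace (D * S * Dᵀ) as a sum of quadratic forms over rows
  have hrows : Matrix.trace (D * S * Dᵀ) = ∑ i, (fun j => D i j) ⬝ᵥ (S *ᵥ fun j => D i j) := by
    simp only [Matrix.trace, Matrix.diag, Matrix.mul_apply, Matrix.transpose_apply,
      dotProduct, mulVec, Finset.sum_mul, Finset.mul_sum]
    refine Finset.sum_congr rfl fun i _ => ?_
    rw [Finset.sum_comm]
    exact Finset.sum_congr rfl fun k _ => Finset.sum_congr rfl fun j _ => by ring
  have hbound : ∀ i, ε * ∑ j, (D i j)^2 ≤ (fun j => D i j) ⬝ᵥ (S *ᵥ fun j => D i j) := by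
    intro i
    have := hquad (fun j => D i j)
    calc ε * ∑ j, (D i j)^2 = ε * ((fun j => D i j) ⬝ᵥ (fun j => D i j)) := by
          simp [dotProduct, sq]
      _ ≤ _ := this
  have : ε * ∑ i, ∑ j, (D i j)^2 ≤ Matrix.trace (D * S * Dᵀ) := by
    rw [hrows, Finset.mul_sum]
    exact Finset.sum_le_sum fun i _ => hbound i
  have hDentry : ∀ i j, D i j = Uplus i j - U₀ i j := fun i j => by simp [hD]
  simp only [hDentry] at this
  linarith [this, htr]
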